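/- Let f : [0, ∞) → [0, ∞) with f ∈ L¹(0, ∞) ∩ L^∞(0, ∞), f differentiable, and f' ∈ L²(0, ∞). Then f(t) → 0 as t → ∞. -/

import Mathlib

open Filter MeasureTheory

/-- Let f : [0,∞) → [0,∞) with f ∈ L¹(0,∞) ∩ L^∞(0,∞), f differentiable,
and f' ∈ L²(0,∞). Then f(t) → 0 as t → ∞. -/
theorem stmt_8 (f : ℝ → ℝ)
    (hnonneg : ∀ t, 0 ≤ t → 0 ≤ f t)
    (hL1 : IntegrableOn f (Set.Ioi 0))
    (hLinf : ∃ M : ℝ, ∀ t, 0 ≤ t → |f t| ≤ M)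
    (hdiff : Differentiable ℝ f)
    (hL2 : IntegrableOn (fun t => (deriv f t) ^ 2) (Set.Ioi 0)) :
    Tendsto f atTop (nhds 0) := by
  obtain ⟨M, hM⟩ := hLinf
  set g : ℝ → ℝ := fun t => f t ^ 2 with hg_def
  set h : ℝ → ℝ := fun t => (2 : ℕ) * f t ^ 1 * deriv f t with hh_def
  have hgd : ∀ t, HasDerivAt g (h t) t := fun t => ((hdiff t).hasDerivAt).pow 2
  -- measurability
  have hfm : AEStronglyMeasurable f (volume.restrict (Set.Ioi (0:ℝ))) :=
    hdiff.continuous.aestronglyMeasurable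
  have hdm : AEStronglyMeasurable (deriv f) (volume.restrict (Set.Ioi (0:ℝ))) :=
    (measurable_deriv f).aestronglyMeasurable
  -- f^2 integrable on Ioi 0
  have hf2 : IntegrableOn (fun t => f t ^ 2) (Set.Ioi 0) := by
    refine ((hL1.abs.const_mul M).mono' (hfm.pow 2) ?_)
    filter_upwards [ae_restrict_mem measurableSet_Ioi] with t ht
    have ht0 : (0:ℝ) ≤ t := le_of_lt ht
    have : ‖f t ^ 2‖ = |f t| * |f t| := by
      rw [Real.norm_eq_abs, abs_pow, sq]
    rw [this]
    exact mul_le_mul_of_nonneg_right (hM t ht0) (abs_nonneg _)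
  -- h integrable on Ioi 0
  have hh : IntegrableOn h (Set.Ioi 0) := by
    refine (hf2.add hL2).mono' ?_ ?_
    · exact ((aestronglyMeasurable_const.mul (hfm.pow 1)).mul hdm)
    · filter_upwards [ae_restrict_mem measurableSet_Ioi] with t ht
      have : ‖h t‖ = 2 * (|f t| * |deriv f t|) := by
        simp [hh_def, Real.norm_eq_abs, abs_mul, mul_assoc]
      rw [this]
      show 2 * (|f t| * |deriv f t|) ≤ f t ^ 2 + deriv f t ^ 2
      nlinarith [sq_nonneg (|f t| - |deriv f t|), sq_abs (f t), sq_abs (deriv f t)]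
  -- FTC on [0, t]
  have hFTC : ∀ t : ℝ, 0 ≤ t → g t = g 0 + ∫ x in (0:ℝ)..t, h x := by
    intro t ht
    have hint : IntervalIntegrable h volume 0 t := by
      rw [intervalIntegrable_iff_integrableOn_Ioc_of_le ht]
      exact hh.mono_set Set.Ioc_subset_Ioi_self
    have := intervalIntegral.integral_eq_sub_of_hasDerivAt (fun x _ => hgd x) hint
    linarith [this]
  -- limit of the interval integral
  have hItend : Tendsto (fun t => ∫ x in (0:ℝ)..t, h x) atTop
      (nhds (∫ x in Set.Ioi (0:ℝ), h x)) :=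
    intervalIntegral_tendsto_integral_Ioi 0 hh tendsto_id
  set L : ℝ := g 0 + ∫ x in Set.Ioi (0:ℝ), h x with hL_def
  have hgtend : Tendsto g atTop (nhds L) := by
    refine Tendsto.congr' ?_ (tendsto_const_nhds.add hItend)
    filter_upwards [eventually_ge_atTop (0:ℝ)] with t ht
    exact (hFTC t ht).symm
  -- L ≥ 0
  have hL0 : 0 ≤ L := by
    refine ge_of_tendsto hgtend ?_
    filter_upwards [eventually_ge_atTop (0:ℝ)] with t ht
    exact sq_nonneg (f t)
  -- L = 0
  have hLzero : L = 0 := by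
    by_contra hne
    have hLpos : 0 < L := lt_of_le_of_ne hL0 (Ne.symm hne)
    have hev : ∀ᶠ t in atTop, L / 2 < g t :=
      hgtend.eventually_const_lt (by linarith)
    obtain ⟨T, hT⟩ := (hev.and (eventually_ge_atTop (0:ℝ))).exists_forall_of_atTop
    set c : ℝ := Real.sqrt (L / 2) with hc_def
    have hcpos : 0 < c := Real.sqrt_pos.mpr (by linarith)
    have hbound : ∀ t ∈ Set.Ioi T, c ≤ f t := by
      intro t ht
      have ht' := hT t (le_of_lt ht)
      have hft : 0 ≤ f t := hnonneg t ht'.2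
      have : c ^ 2 ≤ f t ^ 2 := by
        rw [hc_def, Real.sq_sqrt (by linarith : (0:ℝ) ≤ L / 2)]
        exact le_of_lt ht'.1
      calc c = Real.sqrt (c ^ 2) := by rw [Real.sqrt_sq hcpos.le]
        _ ≤ Real.sqrt (f t ^ 2) := Real.sqrt_le_sqrt this
        _ = f t := Real.sqrt_sq hft
    -- constant c integrable on Ioi T, contradiction
    have hint : IntegrableOn (fun _ => c) (Set.Ioi T) := by
      refine (hL1.mono_set (Set.Ioi_subset_Ioi ?_)).mono' aestronglyMeasurable_const ?_
      · linarith [(hT T le_rfl).2]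
      · filter_upwards [ae_restrict_mem measurableSet_Ioi] with t ht
        rw [Real.norm_eq_abs, abs_of_nonneg hcpos.le]
        exact hbound t ht
    rw [integrableOn_const_iff] at hint
    rcases hint with h1 | h1
    · exact hcpos.ne' (by simpa using h1)
    · simp [Real.volume_Ioi] at h1
  -- conclude
  rw [hLzero] at hgtend
  have hsq : Tendsto (fun t => Real.sqrt (g t)) atTop (nhds 0) := by
    have := (Real.continuous_sqrt.tendsto 0).comp hgtend
    rw [Real.sqrt_zero] at this
    exact this
  refine Tendsto.congr' ?_ hsq
  filter_upwards [eventually_ge_atTop (0:ℝ)] with t ht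
  exact Real.sqrt_sq (hnonneg t ht)
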